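/- Let k ≥ 2, n ≥ 2k, d ≥ 1, let P = P(F) be a nonempty k-local property of [n]^d-arrays over Σ, let (G_0,...,G_r) be an (n,d,k,2k)-system of grids, let ε > 0, and suppose the [n]^d-array A over Σ is ε-far from P. Let W be the family of all maximal (P,A)-witness blocks. Then the total number of entries in the blocks of W satisfies ∑_{B∈W} |B| ≥ ε·(n/3)^d. -/
import Mathlib


open Finset

/-- `I[:ℓ]`: the set of the `ℓ` smallest elements of `I` (or `I` itself if `|I| < ℓ`). -/
def takeSmallest (I : Finset ℕ) (ℓ : ℕ) : Finset ℕ :=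
  I.filter fun x => (I.filter fun y => y ≤ x).card ≤ ℓ

/-- `I[ℓ+1:] = I \ I[:ℓ]`. -/
def dropSmallest (I : Finset ℕ) (ℓ : ℕ) : Finset ℕ :=
  I \ takeSmallest I ℓ

/-- An `(n,w)`-interval partition: a partition of `[n] = {1,…,n}` into consecutive,
pairwise disjoint intervals `I_1, …, I_t`, each of size `w` or `w+1`, where for `j < j'`
every element of `I j` is smaller than every element of `I j'`. -/
structure IntervalPartition (n w : ℕ) where
  t : ℕ
  I : Fin t → Finset ℕ
  interval : ∀ j, ∃ a b, 1 ≤ a ∧ a ≤ b ∧ b ≤ n ∧ I j = Finset.Icc a b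
  size : ∀ j, (I j).card = w ∨ (I j).card = w + 1
  cover : ∀ x ∈ Finset.Icc 1 n, ∃ j, x ∈ I j
  ordered : ∀ j j' : Fin t, j < j' → ∀ x ∈ I j, ∀ y ∈ I j', x < y

/-- The hypergrid `[n]^d`, as a set of tuples. -/
def cube (n d : ℕ) : Set (Fin d → ℕ) :=
  {x | ∀ i, 1 ≤ x i ∧ x i ≤ n}

/-- The `(n,d,k,w)`-grid induced by an `(n,w)`-interval partition. -/
def gridOf (n d k w : ℕ) (P : IntervalPartition n w) : Set (Fin d → ℕ) :=
  {x ∈ cube n d | ∃ i : Fin d, ∃ j : Fin P.t, x i ∈ takeSmallest (P.I j) (k - 1)}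

/-- `G ∈ 𝒢(n,d,k,w)`: `G` is the grid induced by some `(n,w)`-interval partition. -/
def IsGrid (n d k w : ℕ) (G : Set (Fin d → ℕ)) : Prop :=
  ∃ P : IntervalPartition n w, G = gridOf n d k w P

/-- Two entries of `[n]^d` are neighbors if `∑ i, |x i − y i| = 1`. -/
def Neighbor {d : ℕ} (x y : Fin d → ℕ) : Prop :=
  (∑ i, Nat.dist (x i) (y i)) = 1

/-- A `G`-block: a connected component of the neighborhood graph on `[n]^d \ G`. -/
def IsBlock (n d : ℕ) (G B : Set (Fin d → ℕ)) : Prop :=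
  B.Nonempty ∧ B ⊆ cube n d \ G ∧
    (∀ x ∈ B, ∀ y ∈ B,
      Relation.ReflTransGen
        (fun a b => a ∈ cube n d \ G ∧ b ∈ cube n d \ G ∧ Neighbor a b) x y) ∧
    (∀ x ∈ B, ∀ y, y ∈ cube n d \ G → Neighbor x y → y ∈ B)

/-- The closure `B̄` of a block `B`. -/
def blockClosure (n d k : ℕ) (B : Set (Fin d → ℕ)) : Set (Fin d → ℕ) :=
  {x ∈ cube n d | ∃ y ∈ B, ∀ i, Nat.dist (x i) (y i) < k}

/-- The boundary `∂B = B̄ \ B` of a block `B`. -/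
def blockBoundary (n d k : ℕ) (B : Set (Fin d → ℕ)) : Set (Fin d → ℕ) :=
  blockClosure n d k B \ B

/-- A valid location of a width-`k` subarray in `[n]^d`: an element of `[n−k+1]^d`. -/
def ValidLoc (n d k : ℕ) (a : Fin d → ℕ) : Prop :=
  ∀ i, 1 ≤ a i ∧ a i ≤ n - k + 1

/-- The width-`k` box with lowest corner `a`: `{a_1,…,a_1+k−1} × ⋯ × {a_d,…,a_d+k−1}`. -/
def kbox (d k : ℕ) (a : Fin d → ℕ) : Set (Fin d → ℕ) :=
  {x | ∀ i, a i ≤ x i ∧ x i ≤ a i + k - 1}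

/-- Some forbidden pattern of `F` occurs as a consecutive subarray of `A` at location `a`;
patterns are compared on `[k]^d`. -/
def HasCopyAt {σ : Type*} (d k : ℕ) (F : Set ((Fin d → ℕ) → σ))
    (A : (Fin d → ℕ) → σ) (a : Fin d → ℕ) : Prop :=
  ∃ S ∈ F, ∀ j : Fin d → ℕ, (∀ i, 1 ≤ j i ∧ j i ≤ k) →
    A (fun i => a i + j i - 1) = S j

/-- `A` contains an `F`-copy lying inside the set `X`. -/
def HasCopyIn {σ : Type*} (n d k : ℕ) (F : Set ((Fin d → ℕ) → σ))
    (A : (Fin d → ℕ) → σ) (X : Set (Fin d → ℕ)) : Prop :=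
  ∃ a, ValidLoc n d k a ∧ HasCopyAt d k F A a ∧ kbox d k a ⊆ X

/-- `A` satisfies the `k`-local property `P(F)`: it contains no `F`-copy. -/
def SatisfiesP {σ : Type*} (n d k : ℕ) (F : Set ((Fin d → ℕ) → σ))
    (A : (Fin d → ℕ) → σ) : Prop :=
  ¬ ∃ a, ValidLoc n d k a ∧ HasCopyAt d k F A a

/-- `A` is `ε`-far from `P(F)`: every array satisfying `P(F)` differs from `A`
in at least `ε·n^d` entries of `[n]^d`. -/
def FarFrom {σ : Type*} (n d k : ℕ) (F : Set ((Fin d → ℕ) → σ)) (ε : ℝ)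
    (A : (Fin d → ℕ) → σ) : Prop :=
  ∀ A' : (Fin d → ℕ) → σ, SatisfiesP n d k F A' →
    ε * (n : ℝ) ^ d ≤ ({x | x ∈ cube n d ∧ A x ≠ A' x}).ncard

/-- A block `B` is `(P,A)`-unrepairable: every array agreeing with `A` on `∂B`
(including `A` itself) contains an `F`-copy lying inside `B̄`. -/
def Unrepairable {σ : Type*} (n d k : ℕ) (F : Set ((Fin d → ℕ) → σ))
    (A : (Fin d → ℕ) → σ) (B : Set (Fin d → ℕ)) : Prop :=
  ∀ A' : (Fin d → ℕ) → σ, (∀ x ∈ blockBoundary n d k B, A' x = A x) →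
    HasCopyIn n d k F A' (blockClosure n d k B)

/-- `r = ⌊log₂(n/w)⌋`. -/
def sysR (n w : ℕ) : ℕ := Nat.log 2 (n / w)

/-- An `(n,d,k,w)`-system of grids `(G_0, …, G_r)` with `r = ⌊log₂(n/w)⌋`:
`G_i ∈ 𝒢(n,d,k,⌊n/2^(r−i)⌋)` and `G_0 ⊇ G_1 ⊇ ⋯ ⊇ G_r`. -/
structure GridSystem (n d k w : ℕ) where
  G : ℕ → Set (Fin d → ℕ)
  isGrid : ∀ i ≤ sysR n w, IsGrid n d k (n / 2 ^ (sysR n w - i)) (G i)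
  nested : ∀ i j : ℕ, j ≤ i → i ≤ sysR n w → G i ⊆ G j

/-- A `G_i`-block `B` is a `(P,A)`-witness: either `i = 0` and `A` contains an `F`-copy
inside `B̄`, or `i > 0` and `B` is `(P,A)`-unrepairable. -/
def IsWitness {σ : Type*} (n d k w : ℕ) (S : GridSystem n d k w)
    (F : Set ((Fin d → ℕ) → σ)) (A : (Fin d → ℕ) → σ)
    (i : ℕ) (B : Set (Fin d → ℕ)) : Prop :=
  i ≤ sysR n w ∧ IsBlock n d (S.G i) B ∧
    ((i = 0 ∧ HasCopyIn n d k F A (blockClosure n d k B)) ∨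
      (0 < i ∧ Unrepairable n d k F A B))

/-- A witness is maximal if all of its ancestors (blocks of coarser grids containing it)
are `(P,A)`-repairable. -/
def IsMaximalWitness {σ : Type*} (n d k w : ℕ) (S : GridSystem n d k w)
    (F : Set ((Fin d → ℕ) → σ)) (A : (Fin d → ℕ) → σ)
    (i : ℕ) (B : Set (Fin d → ℕ)) : Prop :=
  IsWitness n d k w S F A i B ∧
    ∀ j, i < j → j ≤ sysR n w → ∀ B', IsBlock n d (S.G j) B' → B ⊆ B' →
      ¬ Unrepairable n d k F A B'

/-- The family `W` of all maximal `(P,A)`-witness blocks. -/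
def MaxWitnessFamily {σ : Type*} (n d k w : ℕ) (S : GridSystem n d k w)
    (F : Set ((Fin d → ℕ) → σ)) (A : (Fin d → ℕ) → σ) :
    Set (Set (Fin d → ℕ)) :=
  {B | ∃ i, IsMaximalWitness n d k w S F A i B}

/-- `Par(B)` for a `G_i`-block `B`: the `G_{i+1}`-block containing `B` if `i < r`
(expressed as the union of all such blocks, of which there is exactly one), and
`[n]^d` for `i = r`. -/
def parentSet (n d k w : ℕ) (S : GridSystem n d k w) (i : ℕ)
    (B : Set (Fin d → ℕ)) : Set (Fin d → ℕ) :=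
  if i = sysR n w then cube n d
  else ⋃₀ {B' | IsBlock n d (S.G (i + 1)) B' ∧ B ⊆ B'}

section Aux

open Finset

lemma nat_dist_def (a b : ℕ) : Nat.dist a b = (a - b) + (b - a) := rfl

lemma filter_le_Icc (a b x : ℕ) :
    (Finset.Icc a b).filter (fun y => y ≤ x) = Finset.Icc a (min b x) := by
  ext z
  simp only [Finset.mem_filter, Finset.mem_Icc]
  omega

lemma takeSmallest_Icc (a b ℓ : ℕ) (hl : 1 ≤ ℓ) (h : a + ℓ ≤ b + 1) :
    takeSmallest (Finset.Icc a b) ℓ = Finset.Icc a (a + ℓ - 1) := by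
  unfold takeSmallest
  ext x
  simp only [Finset.mem_filter, filter_le_Icc, Nat.card_Icc, Finset.mem_Icc]
  omega

lemma dropSmallest_Icc (a b ℓ : ℕ) (hl : 1 ≤ ℓ) (h : a + ℓ ≤ b + 1) :
    dropSmallest (Finset.Icc a b) ℓ = Finset.Icc (a + ℓ) b := by
  unfold dropSmallest
  rw [takeSmallest_Icc a b ℓ hl h]
  ext x
  simp only [Finset.mem_sdiff, Finset.mem_Icc]
  omega

end Aux
section Part

open Finset

variable {n w k : ℕ} (P : IntervalPartition n w)

noncomputable def pLo (j : Fin P.t) : ℕ := (P.interval j).choose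
noncomputable def pHi (j : Fin P.t) : ℕ := (P.interval j).choose_spec.choose

lemma pSpec (j : Fin P.t) :
    1 ≤ pLo P j ∧ pLo P j ≤ pHi P j ∧ pHi P j ≤ n ∧
      P.I j = Finset.Icc (pLo P j) (pHi P j) :=
  (P.interval j).choose_spec.choose_spec

lemma pSize (j : Fin P.t) :
    pLo P j + w ≤ pHi P j + 1 ∧ pHi P j + 1 ≤ pLo P j + w + 1 := by
  have h := pSpec P j
  have hc := P.size j
  rw [h.2.2.2, Nat.card_Icc] at hc
  omega

lemma mem_I_iff (j : Fin P.t) (x : ℕ) :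
    x ∈ P.I j ↔ pLo P j ≤ x ∧ x ≤ pHi P j := by
  rw [(pSpec P j).2.2.2, Finset.mem_Icc]

lemma drop_eq (hk : 2 ≤ k) (hw : 2 * k ≤ w) (j : Fin P.t) :
    dropSmallest (P.I j) (k - 1) = Finset.Icc (pLo P j + (k - 1)) (pHi P j) := by
  have h := pSpec P j
  have hs := pSize P j
  rw [h.2.2.2]
  exact dropSmallest_Icc _ _ _ (by omega) (by omega)

lemma mem_drop_iff (hk : 2 ≤ k) (hw : 2 * k ≤ w) (j : Fin P.t) (x : ℕ) :
    x ∈ dropSmallest (P.I j) (k - 1) ↔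
      pLo P j + (k - 1) ≤ x ∧ x ≤ pHi P j := by
  rw [drop_eq P hk hw j, Finset.mem_Icc]

lemma drop_subset_I (j : Fin P.t) : dropSmallest (P.I j) (k - 1) ⊆ P.I j :=
  Finset.sdiff_subset

lemma I_disj {j j' : Fin P.t} (hne : j ≠ j') {x : ℕ} (hx : x ∈ P.I j)
    (hx' : x ∈ P.I j') : False := by
  rcases hne.lt_or_gt with h | h
  · exact lt_irrefl x (P.ordered j j' h x hx x hx')
  · exact lt_irrefl x (P.ordered j' j h x hx' x hx)

lemma drop_gap_core (hk : 2 ≤ k) (hw : 2 * k ≤ w) {j j' : Fin P.t} (hlt : j < j')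
    {x y : ℕ} (hx : x ∈ dropSmallest (P.I j) (k - 1))
    (hy : y ∈ dropSmallest (P.I j') (k - 1)) : x + k ≤ y := by
  have hxI : x ∈ P.I j := drop_subset_I P j hx
  have ha' : pLo P j' ∈ P.I j' := by
    rw [mem_I_iff]; exact ⟨le_refl _, (pSpec P j').2.1⟩
  have hlt2 : x < pLo P j' := P.ordered j j' hlt x hxI _ ha'
  have hy2 := (mem_drop_iff P hk hw j' y).1 hy
  omega

lemma drop_gap (hk : 2 ≤ k) (hw : 2 * k ≤ w) {j j' : Fin P.t} (hne : j ≠ j')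
    {x y : ℕ} (hx : x ∈ dropSmallest (P.I j) (k - 1))
    (hy : y ∈ dropSmallest (P.I j') (k - 1)) : k ≤ Nat.dist x y := by
  rcases hne.lt_or_gt with h | h
  · have := drop_gap_core P hk hw h hx hy
    rw [nat_dist_def]; omega
  · have := drop_gap_core P hk hw h hy hx
    rw [nat_dist_def]; omega

lemma drop_close (hk : 2 ≤ k) (hw : 2 * k ≤ w) {j j' : Fin P.t}
    {x y : ℕ} (hx : x ∈ dropSmallest (P.I j) (k - 1))
    (hy : y ∈ dropSmallest (P.I j') (k - 1)) (hcl : Nat.dist x y < k) : j = j' := by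
  by_contra hne
  exact absurd (drop_gap P hk hw hne hx hy) (by omega)

lemma window_meets_drop (hk : 2 ≤ k) (hw : 2 * k ≤ w) (c : ℕ) (hc1 : 1 ≤ c)
    (hcn : c + (k - 1) ≤ n) :
    ∃ (j : Fin P.t) (z : ℕ), c ≤ z ∧ z ≤ c + (k - 1) ∧
      z ∈ dropSmallest (P.I j) (k - 1) := by
  have he : c + (k - 1) ∈ Finset.Icc 1 n := by rw [Finset.mem_Icc]; omega
  obtain ⟨j, hj⟩ := P.cover _ he
  have hm := (mem_I_iff P j _).1 hj
  by_cases hcase : pLo P j + (k - 1) ≤ c + (k - 1)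
  · exact ⟨j, c + (k - 1), by omega, le_refl _,
      (mem_drop_iff P hk hw j _).2 ⟨hcase, hm.2⟩⟩
  · have hca : c < pLo P j := by omega
    have he2 : pLo P j - 1 ∈ Finset.Icc 1 n := by
      rw [Finset.mem_Icc]
      have := (pSpec P j).2.2.1
      omega
    obtain ⟨j2, hj2⟩ := P.cover _ he2
    have hm2 := (mem_I_iff P j2 _).1 hj2
    have hne : j2 ≠ j := by
      intro hEq
      rw [hEq] at hj2
      have := (mem_I_iff P j _).1 hj2
      omega
    have hb2 : pHi P j2 = pLo P j - 1 := by
      by_contra hne2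
      have haj2 : pLo P j ∈ P.I j2 := by rw [mem_I_iff]; omega
      have haj : pLo P j ∈ P.I j := by rw [mem_I_iff]; omega
      exact I_disj P hne haj2 haj
    have hs2 := pSize P j2
    refine ⟨j2, pLo P j - 1, by omega, by omega, (mem_drop_iff P hk hw j2 _).2 ⟨by omega, by omega⟩⟩

end Part
section Dim

open Finset

lemma neighbor_dist_le {d : ℕ} {x y : Fin d → ℕ} (h : Neighbor x y) (i : Fin d) :
    Nat.dist (x i) (y i) ≤ 1 := by
  have h' : (∑ j, Nat.dist (x j) (y j)) = 1 := h
  have hle : Nat.dist (x i) (y i) ≤ ∑ j, Nat.dist (x j) (y j) :=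
    Finset.single_le_sum (f := fun j => Nat.dist (x j) (y j))
      (fun j _ => Nat.zero_le _) (Finset.mem_univ i)
  omega

lemma box_connected {d : ℕ} (R Q : Set (Fin d → ℕ)) (u v : Fin d → ℕ)
    (hQ : ∀ z, z ∈ Q ↔ ∀ i, u i ≤ z i ∧ z i ≤ v i) (hsub : Q ⊆ R) :
    ∀ x ∈ Q, ∀ y ∈ Q,
      Relation.ReflTransGen (fun a b => a ∈ R ∧ b ∈ R ∧ Neighbor a b) x y := by
  have key : ∀ N : ℕ, ∀ x ∈ Q, ∀ y ∈ Q, (∑ i, Nat.dist (x i) (y i)) = N →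
      Relation.ReflTransGen (fun a b => a ∈ R ∧ b ∈ R ∧ Neighbor a b) x y := by
    intro N
    induction N using Nat.strong_induction_on with
    | _ N ih =>
      intro x hx y hy hN
      by_cases hxy : x = y
      · exact hxy ▸ Relation.ReflTransGen.refl
      · obtain ⟨i0, hi0⟩ := Function.ne_iff.1 hxy
        have hxQ := (hQ x).1 hx
        have hyQ := (hQ y).1 hy
        set t := if x i0 < y i0 then x i0 + 1 else x i0 - 1 with ht
        set z := Function.update x i0 t with hz
        have hbounds : u i0 ≤ t ∧ t ≤ v i0 ∧ Nat.dist (x i0) t = 1 ∧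
            Nat.dist (x i0) (y i0) = Nat.dist t (y i0) + 1 := by
          have h1 := hxQ i0; have h2 := hyQ i0
          rw [ht]; split_ifs with hc <;> simp only [nat_dist_def] <;> omega
        have hzQ : z ∈ Q := by
          rw [hQ]
          intro i
          by_cases hii : i = i0
          · subst hii
            rw [hz, Function.update_self]
            exact ⟨hbounds.1, hbounds.2.1⟩
          · rw [hz, Function.update_of_ne hii]
            exact hxQ i
        have hnb : Neighbor x z := by
          show (∑ i, Nat.dist (x i) (z i)) = 1
          have e : (∑ i, Nat.dist (x i) (z i)) = Nat.dist (x i0) (z i0) := by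
            apply Finset.sum_eq_single_of_mem i0 (Finset.mem_univ i0)
            intro b _ hb
            rw [hz, Function.update_of_ne hb, Nat.dist_self]
          rw [e, hz, Function.update_self]
          exact hbounds.2.2.1
        have hsum : (∑ i, Nat.dist (z i) (y i)) = N - 1 := by
          have e1 : (∑ i, Nat.dist (x i) (y i)) =
              Nat.dist (x i0) (y i0) + ∑ i ∈ Finset.univ.erase i0, Nat.dist (x i) (y i) :=
            (Finset.add_sum_erase _ _ (Finset.mem_univ i0)).symm
          have e2 : (∑ i, Nat.dist (z i) (y i)) =
              Nat.dist (z i0) (y i0) + ∑ i ∈ Finset.univ.erase i0, Nat.dist (z i) (y i) :=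
            (Finset.add_sum_erase _ _ (Finset.mem_univ i0)).symm
          have e3 : (∑ i ∈ Finset.univ.erase i0, Nat.dist (z i) (y i)) =
              ∑ i ∈ Finset.univ.erase i0, Nat.dist (x i) (y i) := by
            apply Finset.sum_congr rfl
            intro b hb
            rw [hz, Function.update_of_ne (Finset.ne_of_mem_erase hb)]
          have hz0 : z i0 = t := by rw [hz, Function.update_self]
          rw [e2, e3, hz0]
          rw [e1, hbounds.2.2.2] at hN
          omega
        have hNpos : 0 < N := by
          have h0 : 0 < Nat.dist (x i0) (y i0) := by rw [nat_dist_def]; omega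
          have hle : Nat.dist (x i0) (y i0) ≤ ∑ i, Nat.dist (x i) (y i) :=
            Finset.single_le_sum (f := fun i => Nat.dist (x i) (y i))
              (fun j _ => Nat.zero_le _) (Finset.mem_univ i0)
          omega
        exact Relation.ReflTransGen.head ⟨hsub hx, hsub hzQ, hnb⟩
          (ih (N - 1) (by omega) z hzQ y hy hsum)
  intro x hx y hy
  exact key _ x hx y hy rfl

variable {n w k d : ℕ} (P : IntervalPartition n w)

lemma mem_compl_grid (hk : 2 ≤ k) (hw : 2 * k ≤ w) (x : Fin d → ℕ) :
    x ∈ cube n d \ gridOf n d k w P ↔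
      ∀ ℓ : Fin d, ∃ j, x ℓ ∈ dropSmallest (P.I j) (k - 1) := by
  constructor
  · rintro ⟨hc, hg⟩ ℓ
    have hx : x ℓ ∈ Finset.Icc 1 n := by rw [Finset.mem_Icc]; exact hc ℓ
    obtain ⟨j, hj⟩ := P.cover _ hx
    refine ⟨j, ?_⟩
    unfold dropSmallest
    rw [Finset.mem_sdiff]
    refine ⟨hj, fun hTake => hg ?_⟩
    exact ⟨hc, ℓ, j, hTake⟩
  · intro h
    have hc : x ∈ cube n d := by
      intro ℓ
      obtain ⟨j, hj⟩ := h ℓ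
      have h1 := (mem_drop_iff P hk hw j _).1 hj
      have h2 := pSpec P j
      constructor <;> omega
    refine ⟨hc, ?_⟩
    rintro ⟨-, ℓ, j', hTake⟩
    obtain ⟨j, hj⟩ := h ℓ
    by_cases hjj : j = j'
    · subst hjj
      unfold dropSmallest at hj
      rw [Finset.mem_sdiff] at hj
      exact hj.2 hTake
    · have h1 : x ℓ ∈ P.I j := drop_subset_I P j hj
      have h2 : x ℓ ∈ P.I j' := by
        unfold takeSmallest at hTake
        exact (Finset.mem_filter.1 hTake).1
      exact I_disj P hjj h1 h2

def prodBlock (k d : ℕ) {n w : ℕ} (P : IntervalPartition n w)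
    (js : Fin d → Fin P.t) : Set (Fin d → ℕ) :=
  {x | ∀ ℓ, x ℓ ∈ dropSmallest (P.I (js ℓ)) (k - 1)}

lemma prodBlock_subset_compl (hk : 2 ≤ k) (hw : 2 * k ≤ w) (js : Fin d → Fin P.t) :
    prodBlock k d P js ⊆ cube n d \ gridOf n d k w P :=
  fun x hx => (mem_compl_grid P hk hw x).2 fun ℓ => ⟨js ℓ, hx ℓ⟩

lemma isBlock_prodBlock (hk : 2 ≤ k) (hw : 2 * k ≤ w) (js : Fin d → Fin P.t) :
    IsBlock n d (gridOf n d k w P) (prodBlock k d P js) := by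
  refine ⟨⟨fun ℓ => pLo P (js ℓ) + (k - 1), fun ℓ => ?_⟩,
    prodBlock_subset_compl P hk hw js, ?_, ?_⟩
  · show pLo P (js ℓ) + (k - 1) ∈ dropSmallest (P.I (js ℓ)) (k - 1)
    rw [mem_drop_iff P hk hw]
    have := pSize P (js ℓ)
    omega
  · apply box_connected _ _ (fun ℓ => pLo P (js ℓ) + (k - 1)) (fun ℓ => pHi P (js ℓ))
    · intro z
      constructor
      · intro hz i
        exact (mem_drop_iff P hk hw _ _).1 (hz i)
      · intro hz i
        exact (mem_drop_iff P hk hw _ _).2 (hz i)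
    · exact prodBlock_subset_compl P hk hw js
  · intro x hx y hy hnb ℓ
    obtain ⟨j', hj'⟩ := (mem_compl_grid P hk hw y).1 hy ℓ
    have hcl : Nat.dist (x ℓ) (y ℓ) < k := lt_of_le_of_lt (neighbor_dist_le hnb ℓ) (by omega)
    have := drop_close P hk hw (hx ℓ) hj' hcl
    rw [this]
    exact hj'

lemma block_eq_prod (hk : 2 ≤ k) (hw : 2 * k ≤ w) {B : Set (Fin d → ℕ)}
    (hB : IsBlock n d (gridOf n d k w P) B) :
    ∃ js : Fin d → Fin P.t, B = prodBlock k d P js := by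
  obtain ⟨⟨x0, hx0⟩, hBsub, hBconn, hBcl⟩ := hB
  have hx0c := (mem_compl_grid P hk hw x0).1 (hBsub hx0)
  choose js hjs using hx0c
  refine ⟨js, Set.Subset.antisymm ?_ ?_⟩
  · intro y hy
    have hpath := hBconn x0 hx0 y hy
    clear hy
    induction hpath with
    | refl => exact hjs
    | tail hab hbc ih =>
      rename_i b c
      intro ℓ
      obtain ⟨hbR, hcR, hnb⟩ := hbc
      obtain ⟨j', hj'⟩ := (mem_compl_grid P hk hw c).1 hcR ℓ
      have hcl : Nat.dist (b ℓ) (c ℓ) < k :=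
        lt_of_le_of_lt (neighbor_dist_le hnb ℓ) (by omega)
      have := drop_close P hk hw (ih ℓ) hj' hcl
      rw [this]
      exact hj'
  · intro y hy
    have hpath := box_connected (cube n d \ gridOf n d k w P) (prodBlock k d P js)
      (fun ℓ => pLo P (js ℓ) + (k - 1)) (fun ℓ => pHi P (js ℓ))
      (by
        intro z
        constructor
        · intro hz i; exact (mem_drop_iff P hk hw _ _).1 (hz i)
        · intro hz i; exact (mem_drop_iff P hk hw _ _).2 (hz i))
      (prodBlock_subset_compl P hk hw js) x0 hjs y hy
    clear hy
    induction hpath with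
    | refl => exact hx0
    | tail hab hbc ih =>
      rename_i b c
      exact hBcl b ih c hbc.2.1 hbc.2.2

lemma block_subset_block {n d : ℕ} {G G' B B' : Set (Fin d → ℕ)} (hGG : G' ⊆ G)
    (hB : IsBlock n d G B) (hB' : IsBlock n d G' B')
    (hmeet : (B ∩ B').Nonempty) : B ⊆ B' := by
  obtain ⟨z, hzB, hzB'⟩ := hmeet
  intro y hy
  have hpath := hB.2.2.1 z hzB y hy
  clear hy
  induction hpath with
  | refl => exact hzB'
  | tail hab hbc ih =>
    rename_i b c
    refine hB'.2.2.2 b ih c ?_ hbc.2.2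
    have hc := hbc.2.1
    exact ⟨hc.1, fun hcG' => hc.2 (hGG hcG')⟩

lemma ncard_prodBlock (js : Fin d → Fin P.t) :
    (prodBlock k d P js).ncard = ∏ ℓ, (dropSmallest (P.I (js ℓ)) (k - 1)).card := by
  have he : prodBlock k d P js =
      ↑(Fintype.piFinset fun ℓ => dropSmallest (P.I (js ℓ)) (k - 1)) := by
    ext x
    simp [prodBlock, Fintype.mem_piFinset]
  rw [he, Set.ncard_coe_finset, Fintype.card_piFinset]

lemma drop_card (hk : 2 ≤ k) (hw : 2 * k ≤ w) (j : Fin P.t) :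
    w + 1 ≤ (dropSmallest (P.I j) (k - 1)).card + k ∧
      (dropSmallest (P.I j) (k - 1)).card + k ≤ w + 2 := by
  rw [drop_eq P hk hw, Nat.card_Icc]
  have h1 := pSize P j
  have h2 := pSpec P j
  omega

end Dim
section Box

open Finset

variable {n w k d : ℕ} (P : IntervalPartition n w)

lemma valid_kbox_subset_cube {n d k : ℕ} (hkn : k ≤ n) {a : Fin d → ℕ}
    (ha : ValidLoc n d k a) : kbox d k a ⊆ cube n d := by
  intro x hx i
  have h1 := ha i
  have h2 := hx i
  constructor <;> omega

lemma exists_block_meeting_kbox (hk : 2 ≤ k) (hw : 2 * k ≤ w) {a : Fin d → ℕ}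
    (ha : ValidLoc n d k a) (hkn : k ≤ n) :
    ∃ js : Fin d → Fin P.t, (prodBlock k d P js ∩ kbox d k a).Nonempty := by
  have h : ∀ ℓ : Fin d, ∃ (j : Fin P.t) (z : ℕ), a ℓ ≤ z ∧ z ≤ a ℓ + (k - 1) ∧
      z ∈ dropSmallest (P.I j) (k - 1) := by
    intro ℓ
    exact window_meets_drop P hk hw (a ℓ) (ha ℓ).1 (by have := (ha ℓ).2; omega)
  choose js z h1 h2 h3 using h
  exact ⟨js, z, h3, fun i => ⟨h1 i, by have := h2 i; omega⟩⟩

lemma block_meeting_kbox_unique (hk : 2 ≤ k) (hw : 2 * k ≤ w) {a : Fin d → ℕ}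
    {B B' : Set (Fin d → ℕ)}
    (hB : IsBlock n d (gridOf n d k w P) B) (hB' : IsBlock n d (gridOf n d k w P) B')
    (h1 : (B ∩ kbox d k a).Nonempty) (h2 : (B' ∩ kbox d k a).Nonempty) : B = B' := by
  obtain ⟨js, rfl⟩ := block_eq_prod P hk hw hB
  obtain ⟨js', rfl⟩ := block_eq_prod P hk hw hB'
  obtain ⟨z, hz, hzb⟩ := h1
  obtain ⟨z', hz', hzb'⟩ := h2
  have hjs : js = js' := by
    funext ℓ
    have hd : Nat.dist (z ℓ) (z' ℓ) < k := by
      have e1 := hzb ℓ; have e2 := hzb' ℓ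
      rw [nat_dist_def]; omega
    exact drop_close P hk hw (hz ℓ) (hz' ℓ) hd
  rw [hjs]

lemma kbox_subset_closure {n d k : ℕ} (hk : 2 ≤ k) (hkn : k ≤ n) {a : Fin d → ℕ}
    (ha : ValidLoc n d k a) {B : Set (Fin d → ℕ)} {z : Fin d → ℕ}
    (hzB : z ∈ B) (hzbox : z ∈ kbox d k a) :
    kbox d k a ⊆ blockClosure n d k B := by
  intro x hx
  refine ⟨valid_kbox_subset_cube hkn ha hx, z, hzB, fun i => ?_⟩
  have e1 := hx i; have e2 := hzbox i; have e3 := (ha i).1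
  rw [nat_dist_def]; omega

lemma hasCopyAt_congr {σ : Type*} {d k : ℕ} (hk : 1 ≤ k) {F : Set ((Fin d → ℕ) → σ)}
    {A₁ A₂ : (Fin d → ℕ) → σ} {a : Fin d → ℕ}
    (h : ∀ x ∈ kbox d k a, A₁ x = A₂ x) :
    HasCopyAt d k F A₁ a → HasCopyAt d k F A₂ a := by
  rintro ⟨Spat, hS, hmatch⟩
  refine ⟨Spat, hS, fun j hj => ?_⟩
  have hmem : (fun i => a i + j i - 1) ∈ kbox d k a := by
    intro i
    have := hj i
    constructor <;> simp <;> omega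
  rw [← h _ hmem]
  exact hmatch j hj

lemma hasCopyIn_congr {σ : Type*} {n d k : ℕ} (hk : 1 ≤ k) {F : Set ((Fin d → ℕ) → σ)}
    {A₁ A₂ : (Fin d → ℕ) → σ} {X : Set (Fin d → ℕ)}
    (h : ∀ x ∈ X, A₁ x = A₂ x) : HasCopyIn n d k F A₁ X → HasCopyIn n d k F A₂ X := by
  rintro ⟨a, hv, hcopy, hsub⟩
  exact ⟨a, hv, hasCopyAt_congr hk (fun x hx => h x (hsub hx)) hcopy, hsub⟩

lemma ncard_biUnion_le {α : Type*} (t : Finset (Set α)) :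
    (⋃ s ∈ t, s).ncard ≤ ∑ s ∈ t, s.ncard := by
  classical
  induction t using Finset.induction_on with
  | empty => simp
  | @insert s t' hnotmem ih =>
    rw [Finset.sum_insert hnotmem]
    have hU : (⋃ x ∈ insert s t', x) = s ∪ ⋃ x ∈ t', x := by
      simp [Set.biUnion_insert]
    rw [hU]
    exact le_trans (Set.ncard_union_le _ _) (by omega)

lemma cube_eq_pi (n d : ℕ) :
    cube n d = ↑(Fintype.piFinset fun _ : Fin d => Finset.Icc 1 n) := by
  ext x
  simp only [cube, Set.mem_setOf_eq, Finset.coe_sort_coe, Finset.mem_coe,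
    Fintype.mem_piFinset, Finset.mem_Icc]

lemma cube_finite (n d : ℕ) : (cube n d).Finite := by
  rw [cube_eq_pi]
  exact (Fintype.piFinset _).finite_toSet

lemma ncard_cube (n d : ℕ) : (cube n d).ncard = n ^ d := by
  rw [cube_eq_pi, Set.ncard_coe_finset, Fintype.card_piFinset]
  simp

end Box
/-- If the `k`-local property `P(F)` is nonempty and `A` is `ε`-far
from it, then for an `(n,d,k,2k)`-system of grids, the total number of entries in the
maximal `(P,A)`-witness blocks is at least `ε·(n/3)^d`. -/
theorem maximal_witnesses_total_size (n d k : ℕ) (hd : 1 ≤ d) (hk : 2 ≤ k)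
    (hn : 2 * k ≤ n) {σ : Type*} (F : Set ((Fin d → ℕ) → σ))
    (hP : ∃ A₀ : (Fin d → ℕ) → σ, SatisfiesP n d k F A₀)
    (S : GridSystem n d k (2 * k)) (ε : ℝ) (hε : 0 < ε)
    (A : (Fin d → ℕ) → σ) (hA : FarFrom n d k F ε A) :
    ε * ((n : ℝ) / 3) ^ d ≤
      ∑ᶠ B ∈ MaxWitnessFamily n d k (2 * k) S F A, (B.ncard : ℝ) := by
  classical
  set r := sysR n (2 * k) with hr
  have hkn : k ≤ n := by omega
  have hn0 : 0 < n := by omega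
  -- width arithmetic
  have hW0 : 2 * k ≤ n / 2 ^ r := by
    have h2k : n / (2 * k) ≠ 0 := by
      have h1 : 1 ≤ n / (2 * k) := (Nat.one_le_div_iff (by omega)).2 hn
      omega
    have h1 : 2 ^ r ≤ n / (2 * k) := by
      rw [hr]
      exact Nat.pow_log_le_self 2 h2k
    have h2 : 2 ^ r * (2 * k) ≤ n := (Nat.le_div_iff_mul_le (by omega)).1 h1
    refine (Nat.le_div_iff_mul_le (by positivity)).2 ?_
    rw [Nat.mul_comm]
    exact h2
  have hwj : ∀ j, j ≤ r → 2 * k ≤ n / 2 ^ (r - j) := by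
    intro j hj
    refine le_trans hW0 (Nat.div_le_div_left ?_ (by positivity))
    exact Nat.pow_le_pow_right (by omega) (by omega)
  have hWdbl : ∀ j, 1 ≤ j → j ≤ r →
      n / 2 ^ (r - j) ≤ 2 * (n / 2 ^ (r - (j - 1))) + 1 ∧
        2 * (n / 2 ^ (r - (j - 1))) ≤ n / 2 ^ (r - j) := by
    intro j h1 h2
    have he : r - (j - 1) = (r - j) + 1 := by omega
    rw [he, pow_succ, ← Nat.div_div_eq_div_mul]
    omega
  have hWgrow : ∀ j j', j < j' → j' ≤ r → 2 * (n / 2 ^ (r - j)) ≤ n / 2 ^ (r - j') := by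
    intro j j' hlt hj'
    have haux : ∀ t j', j' ≤ r → j' = j + 1 + t → 2 * (n / 2 ^ (r - j)) ≤ n / 2 ^ (r - j') := by
      intro t
      induction t with
      | zero =>
        intro j' hj' he
        have h := (hWdbl j' (by omega) hj').2
        have he2 : j' - 1 = j := by omega
        rw [he2] at h
        exact h
      | succ t ih =>
        intro j' hj' he
        have h1 := ih (j' - 1) (by omega) (by omega)
        have h2 := (hWdbl j' (by omega) hj').2
        omega
    exact haux (j' - j - 1) j' hj' (by omega)
  -- partitions
  have hGrid' : ∀ j, j ≤ r → ∃ P : IntervalPartition n (n / 2 ^ (r - j)),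
      S.G j = gridOf n d k (n / 2 ^ (r - j)) P := fun j hj => S.isGrid j hj
  choose Pp hPp using hGrid'
  -- block facts at each level
  have hCb : ∀ (a : Fin d → ℕ), ValidLoc n d k a → ∀ j, j ≤ r →
      ∃ B, IsBlock n d (S.G j) B ∧ (B ∩ kbox d k a).Nonempty := by
    intro a ha j hj
    obtain ⟨js, hne⟩ := exists_block_meeting_kbox (Pp j hj) hk (hwj j hj) ha hkn
    refine ⟨_, ?_, hne⟩
    rw [hPp j hj]
    exact isBlock_prodBlock _ hk (hwj j hj) js
  have hCbU : ∀ (a : Fin d → ℕ) j, j ≤ r → ∀ B B', IsBlock n d (S.G j) B →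
      IsBlock n d (S.G j) B' → (B ∩ kbox d k a).Nonempty →
      (B' ∩ kbox d k a).Nonempty → B = B' := by
    intro a j hj B B' h1 h2 h3 h4
    rw [hPp j hj] at h1 h2
    exact block_meeting_kbox_unique _ hk (hwj j hj) h1 h2 h3 h4
  have hnest : ∀ j j', j ≤ j' → j' ≤ r → ∀ B B', IsBlock n d (S.G j) B →
      IsBlock n d (S.G j') B' → (B ∩ B').Nonempty → B ⊆ B' := by
    intro j j' hle hj' B B' hB hB' hmeet
    exact block_subset_block (S.nested j' j hle hj') hB hB' hmeet
  have hchain : ∀ (a : Fin d → ℕ), ValidLoc n d k a → ∀ j j', j ≤ j' → j' ≤ r →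
      ∀ B B', IsBlock n d (S.G j) B → IsBlock n d (S.G j') B' →
      (B ∩ kbox d k a).Nonempty → (B' ∩ kbox d k a).Nonempty → B ⊆ B' := by
    intro a ha j j' hle hj' B B' hB hB' h1 h2
    obtain ⟨z, hzB, hzbox⟩ := h1
    have hzc : z ∈ cube n d \ S.G j := hB.2.1 hzB
    have hzc' : z ∈ cube n d \ S.G j' :=
      ⟨hzc.1, fun hzG => hzc.2 (S.nested j' j hle hj' hzG)⟩
    -- find the level-j' block containing z
    have hzc'' : z ∈ cube n d \ gridOf n d k (n / 2 ^ (r - j')) (Pp j' hj') := by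
      rwa [hPp j' hj'] at hzc'
    have hzdrop := (mem_compl_grid (Pp j' hj') hk (hwj j' hj') z).1 hzc''
    choose jsz hjsz using hzdrop
    have hzD : z ∈ prodBlock k d (Pp j' hj') jsz := hjsz
    have hDblock : IsBlock n d (S.G j') (prodBlock k d (Pp j' hj') jsz) := by
      rw [hPp j' hj']
      exact isBlock_prodBlock _ hk (hwj j' hj') jsz
    have hDm : ((prodBlock k d (Pp j' hj') jsz) ∩ kbox d k a).Nonempty := ⟨z, hzD, hzbox⟩
    have hDB' : prodBlock k d (Pp j' hj') jsz = B' := hCbU a j' hj' _ B' hDblock hB' hDm h2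
    have hmeet : (B ∩ B').Nonempty := ⟨z, hzB, hDB' ▸ hzD⟩
    exact hnest j j' hle hj' B B' hB hB' hmeet
  have hcardUB : ∀ j, j ≤ r → ∀ B : Set (Fin d → ℕ), IsBlock n d (S.G j) B →
      ∃ cards : Fin d → ℕ, B.ncard = ∏ ℓ, cards ℓ ∧ ∀ ℓ,
        n / 2 ^ (r - j) + 1 ≤ cards ℓ + k ∧ cards ℓ + k ≤ n / 2 ^ (r - j) + 2 := by
    intro j hj B hB
    rw [hPp j hj] at hB
    obtain ⟨js, rfl⟩ := block_eq_prod (Pp j hj) hk (hwj j hj) hB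
    refine ⟨fun ℓ => (dropSmallest ((Pp j hj).I (js ℓ)) (k - 1)).card,
      ncard_prodBlock _ js, fun ℓ => ?_⟩
    beta_reduce
    have := drop_card (Pp j hj) hk (hwj j hj) (js ℓ)
    omega
  have hlevelcore : ∀ j j', j < j' → j' ≤ r → ∀ B : Set (Fin d → ℕ),
      IsBlock n d (S.G j) B → IsBlock n d (S.G j') B → False := by
    intro j j' hlt hj' B h1 h2
    obtain ⟨c1, hc1, hb1⟩ := hcardUB j (by omega) B h1
    obtain ⟨c2, hc2, hb2⟩ := hcardUB j' hj' B h2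
    have hg : 2 * (n / 2 ^ (r - j)) ≤ n / 2 ^ (r - j') := hWgrow j j' hlt hj'
    have hm := hwj j (by omega)
    have hne : Nonempty (Fin d) := ⟨⟨0, by omega⟩⟩
    have hltp : ∏ ℓ, c1 ℓ < ∏ ℓ, c2 ℓ := by
      refine Finset.prod_lt_prod_of_nonempty (fun ℓ _ => ?_) (fun ℓ _ => ?_)
        Finset.univ_nonempty
      · have := hb1 ℓ; omega
      · have e1 := hb1 ℓ; have e2 := hb2 ℓ; omega
    rw [← hc1, ← hc2] at hltp
    exact lt_irrefl _ hltp
  -- the family of maximal witnesses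
  have hWfin : (MaxWitnessFamily n d k (2 * k) S F A).Finite := by
    apply Set.Finite.subset (cube_finite n d).finite_subsets
    rintro B ⟨i, ⟨⟨_, hB, _⟩, _⟩⟩
    exact fun x hx => (hB.2.1 hx).1
  have hfseq : (∑ᶠ B ∈ MaxWitnessFamily n d k (2 * k) S F A, (B.ncard : ℝ)) =
      ∑ B ∈ hWfin.toFinset, (B.ncard : ℝ) := by
    exact finsum_mem_eq_finite_toFinset_sum _ hWfin
  -- ε ≤ 1
  obtain ⟨A₀, hA₀⟩ := hP
  have hε1 : ε ≤ 1 := by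
    have hεn := hA A₀ hA₀
    have hdle : ({x | x ∈ cube n d ∧ A x ≠ A₀ x}).ncard ≤ n ^ d := by
      rw [← ncard_cube n d]
      exact Set.ncard_le_ncard (fun x hx => hx.1) (cube_finite n d)
    have hnp : (0 : ℝ) < (n : ℝ) ^ d := by positivity
    have hdle' : (({x | x ∈ cube n d ∧ A x ≠ A₀ x}).ncard : ℝ) ≤ (n : ℝ) ^ d := by
      exact_mod_cast hdle
    nlinarith
  have hn3 : (n : ℝ) / 3 ≤ ((n + 1 - k : ℕ) : ℝ) := by
    have hnat : n ≤ 3 * (n + 1 - k) := by omega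
    have : (n : ℝ) ≤ 3 * ((n + 1 - k : ℕ) : ℝ) := by exact_mod_cast hnat
    linarith
  have hn30 : (0 : ℝ) ≤ (n : ℝ) / 3 := by positivity
  by_cases hTop : ∃ B, IsBlock n d (S.G r) B ∧
      ((r = 0 ∧ HasCopyIn n d k F A (blockClosure n d k B)) ∨
        (0 < r ∧ Unrepairable n d k F A B))
  · -- Case 1 : a top-level witness exists
    obtain ⟨B, hBblock, hBcond⟩ := hTop
    have hBW : B ∈ MaxWitnessFamily n d k (2 * k) S F A := by
      refine ⟨r, ⟨le_refl r, hBblock, hBcond⟩, ?_⟩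
      intro j hj1 hj2
      exact absurd hj2 (by omega)
    obtain ⟨c1, hc1, hb1⟩ := hcardUB r (le_refl r) B hBblock
    have hWr : n / 2 ^ (r - r) = n := by simp
    have hBn : (n + 1 - k) ^ d ≤ B.ncard := by
      rw [hc1]
      calc (n + 1 - k) ^ d = ∏ _ℓ : Fin d, (n + 1 - k) := by
            rw [Finset.prod_const, Finset.card_univ, Fintype.card_fin]
        _ ≤ ∏ ℓ, c1 ℓ := by
            refine Finset.prod_le_prod (fun _ _ => Nat.zero_le _) (fun ℓ _ => ?_)
            have := hb1 ℓ
            rw [hWr] at this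
            omega
    have hsum : (B.ncard : ℝ) ≤ ∑ B' ∈ hWfin.toFinset, (B'.ncard : ℝ) := by
      refine Finset.single_le_sum (f := fun B' : Set (Fin d → ℕ) => ((B'.ncard : ℕ) : ℝ))
        (fun _ _ => by positivity) ?_
      exact (Set.Finite.mem_toFinset hWfin).2 hBW
    rw [hfseq]
    have h1 : ((n + 1 - k : ℕ) : ℝ) ^ d ≤ (B.ncard : ℝ) := by exact_mod_cast hBn
    have h2 : ((n : ℝ) / 3) ^ d ≤ ((n + 1 - k : ℕ) : ℝ) ^ d :=
      pow_le_pow_left₀ hn30 hn3 d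
    have h3 : ε * ((n : ℝ) / 3) ^ d ≤ ((n : ℝ) / 3) ^ d := by
      nlinarith [pow_nonneg hn30 d]
    linarith
  · -- Case 2 : no top-level witness
    set Tpred : ℕ → Set (Fin d → ℕ) → Prop := fun j C =>
      1 ≤ j ∧ j ≤ r ∧ IsBlock n d (S.G j) C ∧
        (∀ j', j ≤ j' → j' ≤ r → ∀ C', IsBlock n d (S.G j') C' → C ⊆ C' →
          ¬ Unrepairable n d k F A C') ∧
        (∃ B, IsBlock n d (S.G (j - 1)) B ∧ B ⊆ C ∧
          ((j - 1 = 0 ∧ HasCopyIn n d k F A (blockClosure n d k B)) ∨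
            (0 < j - 1 ∧ Unrepairable n d k F A B))) with hTdef
    -- repair function
    have hZex : ∃ Z : Set (Fin d → ℕ) → (Fin d → ℕ) → σ,
        (∀ C x, Z C x ≠ A x → x ∈ C) ∧
        (∀ C, ¬ Unrepairable n d k F A C →
          ¬ HasCopyIn n d k F (Z C) (blockClosure n d k C)) := by
      have hch : ∀ C : Set (Fin d → ℕ), ∃ ZC : (Fin d → ℕ) → σ,
          (∀ x, ZC x ≠ A x → x ∈ C) ∧
          (¬ Unrepairable n d k F A C →
            ¬ HasCopyIn n d k F ZC (blockClosure n d k C)) := by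
        intro C
        by_cases hC : Unrepairable n d k F A C
        · exact ⟨A, fun x h => absurd rfl h, fun h => absurd hC h⟩
        · have hC' := hC
          unfold Unrepairable at hC'
          push_neg at hC'
          obtain ⟨A₁, hb, hnc⟩ := hC'
          refine ⟨fun x => if x ∈ C then A₁ x else A x, ?_, ?_⟩
          · intro x h
            by_contra hx
            exact h (if_neg hx)
          · intro _ hcopy
            apply hnc
            refine hasCopyIn_congr (by omega) ?_ hcopy
            intro x hx
            by_cases hxC : x ∈ C
            · rw [if_pos hxC]
            · rw [if_neg hxC]
              exact (hb x ⟨hx, hxC⟩).symm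
      choose Z h1 h2 using hch
      exact ⟨Z, h1, h2⟩
    obtain ⟨Z, hZdiff, hZgood⟩ := hZex
    set Px : (Fin d → ℕ) → ℕ → Prop := fun x j => ∃ C, Tpred j C ∧ x ∈ C with hPxdef
    set Astar : (Fin d → ℕ) → σ := fun x =>
      if h : ∃ C, Tpred (Nat.findGreatest (Px x) r) C ∧ x ∈ C then Z h.choose x
      else A x with hAstar
    -- `Astar` satisfies the property
    have hSat : SatisfiesP n d k F Astar := by
      rintro ⟨a, hva, hcopy⟩
      by_cases hS : ∃ j B, IsBlock n d (S.G j) B ∧ (B ∩ kbox d k a).Nonempty ∧ Tpred j B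
      · -- the box meets a T-block ; take the highest level
        set QQ : ℕ → Prop := fun j => ∃ B, IsBlock n d (S.G j) B ∧
          (B ∩ kbox d k a).Nonempty ∧ Tpred j B with hQQdef
        obtain ⟨j0, B0, hB0b, hB0m, hB0T⟩ := hS
        have hj0r : j0 ≤ r := hB0T.2.1
        have hQM : QQ (Nat.findGreatest QQ r) :=
          Nat.findGreatest_spec hj0r ⟨B0, hB0b, hB0m, hB0T⟩
        set jM := Nat.findGreatest QQ r with hjMdef
        obtain ⟨C, hCb', hCm, hCT⟩ := hQM
        have hjMr : jM ≤ r := Nat.findGreatest_le r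
        have hkey : ∀ x ∈ kbox d k a, ∀ j' C', Tpred j' C' → x ∈ C' → C' ⊆ C := by
          intro x hx j' C' hT' hx'
          have hC'm : (C' ∩ kbox d k a).Nonempty := ⟨x, hx', hx⟩
          have hj'le : j' ≤ jM := by
            by_contra hgt
            have hQQj' : QQ j' := ⟨C', hT'.2.2.1, hC'm, hT'⟩
            have hlt : jM < j' := by omega
            rw [hjMdef] at hlt
            exact Nat.findGreatest_is_greatest hlt hT'.2.1 hQQj'
          exact hchain a hva j' jM hj'le hjMr C' C hT'.2.2.1 hCb' hC'm hCm
        have hagree : ∀ x ∈ kbox d k a, Astar x = Z C x := by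
          intro x hx
          by_cases hxC : x ∈ C
          · have hPxjM : Px x jM := ⟨C, hCT, hxC⟩
            have hge : jM ≤ Nat.findGreatest (Px x) r := Nat.le_findGreatest hjMr hPxjM
            have hle : Nat.findGreatest (Px x) r ≤ jM := by
              by_contra hgt
              push_neg at hgt
              have hPxspec : Px x (Nat.findGreatest (Px x) r) :=
                Nat.findGreatest_spec hjMr hPxjM
              obtain ⟨C', hT', hx'⟩ := hPxspec
              have hQQ2 : QQ (Nat.findGreatest (Px x) r) :=
                ⟨C', hT'.2.2.1, ⟨x, hx', hx⟩, hT'⟩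
              have hlt : jM < Nat.findGreatest (Px x) r := hgt
              rw [hjMdef] at hlt
              exact Nat.findGreatest_is_greatest hlt (Nat.findGreatest_le r) hQQ2
            have hEq : Nat.findGreatest (Px x) r = jM := le_antisymm hle hge
            have hex : ∃ C', Tpred (Nat.findGreatest (Px x) r) C' ∧ x ∈ C' := by
              rw [hEq]
              exact ⟨C, hCT, hxC⟩
            have hcc := hex.choose_spec
            have hccC : hex.choose = C := by
              have hCb'' : IsBlock n d (S.G (Nat.findGreatest (Px x) r)) C := by
                rw [hEq]
                exact hCb'
              exact hCbU a _ (Nat.findGreatest_le r) _ C hcc.1.2.2.1 hCb''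
                ⟨x, hcc.2, hx⟩ hCm
            simp only [hAstar]
            rw [dif_pos hex, hccC]
          · have hAx : Astar x = A x := by
              simp only [hAstar]
              by_cases hex : ∃ C', Tpred (Nat.findGreatest (Px x) r) C' ∧ x ∈ C'
              · exfalso
                obtain ⟨C', hT', hx'⟩ := hex
                exact hxC (hkey x hx _ C' hT' hx' hx')
              · rw [dif_neg hex]
            have hZx : Z C x = A x := by
              by_contra h
              exact hxC (hZdiff C x h)
            rw [hAx, hZx]
        have hrep : ¬ Unrepairable n d k F A C :=
          hCT.2.2.2.1 jM (le_refl jM) hjMr C hCT.2.2.1 (subset_refl C)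
        apply hZgood C hrep
        obtain ⟨z, hzC, hzbox⟩ := hCm
        exact ⟨a, hva, hasCopyAt_congr (by omega) hagree hcopy,
          kbox_subset_closure hk hkn hva hzC hzbox⟩
      · -- the box meets no T-block : contradiction via a maximal witness level
        have hagreeA : ∀ x ∈ kbox d k a, Astar x = A x := by
          intro x hx
          simp only [hAstar]
          by_cases hex : ∃ C', Tpred (Nat.findGreatest (Px x) r) C' ∧ x ∈ C'
          · exfalso
            obtain ⟨C', hT', hx'⟩ := hex
            exact hS ⟨_, C', hT'.2.2.1, ⟨x, hx', hx⟩, hT'⟩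
          · rw [dif_neg hex]
        have hcopyA : HasCopyAt d k F A a := hasCopyAt_congr (by omega) hagreeA hcopy
        set Wc : ℕ → Prop := fun j => ∃ B, IsBlock n d (S.G j) B ∧
          (B ∩ kbox d k a).Nonempty ∧
          ((j = 0 ∧ HasCopyIn n d k F A (blockClosure n d k B)) ∨
            (0 < j ∧ Unrepairable n d k F A B)) with hWcdef
        have hWc0 : Wc 0 := by
          obtain ⟨B0, hB0, hB0m⟩ := hCb a hva 0 (Nat.zero_le r)
          obtain ⟨z, hzB, hzbox⟩ := hB0m
          exact ⟨B0, hB0, ⟨z, hzB, hzbox⟩, Or.inl ⟨rfl, a, hva, hcopyA,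
            kbox_subset_closure hk hkn hva hzB hzbox⟩⟩
        have hjsW : Wc (Nat.findGreatest Wc r) := Nat.findGreatest_spec (Nat.zero_le r) hWc0
        set jw := Nat.findGreatest Wc r with hjwdef
        have hjwr : jw ≤ r := Nat.findGreatest_le r
        have hjwlt : jw < r := by
          rcases eq_or_lt_of_le hjwr with he | h
          · exfalso
            obtain ⟨B, hB, hm, hcond⟩ := hjsW
            rw [he] at hB hcond
            exact hTop ⟨B, hB, hcond⟩
          · exact h
        obtain ⟨Bw, hBw, hBwm, hBwcond⟩ := hjsW
        obtain ⟨Cp, hCp, hCpm⟩ := hCb a hva (jw + 1) (by omega)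
        have hTC : Tpred (jw + 1) Cp := by
          refine ⟨by omega, by omega, hCp, ?_, ?_⟩
          · intro j' hj1 hj2 C' hC' hsub hunrep
            have hC'm : (C' ∩ kbox d k a).Nonempty := by
              obtain ⟨z, hz1, hz2⟩ := hCpm
              exact ⟨z, hsub hz1, hz2⟩
            have hWcj' : Wc j' := ⟨C', hC', hC'm, Or.inr ⟨by omega, hunrep⟩⟩
            have hlt : jw < j' := by omega
            rw [hjwdef] at hlt
            exact Nat.findGreatest_is_greatest hlt hj2 hWcj'
          · refine ⟨Bw, by simpa using hBw, ?_, by simpa using hBwcond⟩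
            exact hchain a hva jw (jw + 1) (by omega) (by omega) Bw Cp hBw hCp hBwm hCpm
        exact hS ⟨jw + 1, Cp, hCp, hCpm, hTC⟩
    -- counting
    have hfar := hA Astar hSat
    have h𝒯fin : {C : Set (Fin d → ℕ) | ∃ j, Tpred j C}.Finite := by
      apply Set.Finite.subset (cube_finite n d).finite_subsets
      rintro C ⟨j, hT⟩
      exact fun x hx => (hT.2.2.1.2.1 hx).1
    set tF := h𝒯fin.toFinset with htFdef
    have htFmem : ∀ C, C ∈ tF ↔ ∃ j, Tpred j C := by
      intro C
      rw [htFdef, Set.Finite.mem_toFinset]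
      exact Iff.rfl
    have hdiffsub : {x | x ∈ cube n d ∧ A x ≠ Astar x} ⊆ ⋃ C ∈ tF, C := by
      rintro x ⟨hxc, hxne⟩
      have hne : Astar x ≠ A x := fun h => hxne h.symm
      simp only [hAstar] at hne
      by_cases hex : ∃ C', Tpred (Nat.findGreatest (Px x) r) C' ∧ x ∈ C'
      · rw [dif_pos hex] at hne
        have hxm := hZdiff _ x hne
        exact Set.mem_biUnion ((htFmem _).2 ⟨_, hex.choose_spec.1⟩) hxm
      · rw [dif_neg hex] at hne
        exact absurd rfl hne
    have hUfin : (⋃ C ∈ tF, C).Finite := by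
      apply Set.Finite.biUnion tF.finite_toSet
      intro C hC
      have hC' : ∃ j, Tpred j C := (htFmem C).1 hC
      obtain ⟨j, hT⟩ := hC'
      exact Set.Finite.subset (cube_finite n d) (fun x hx => (hT.2.2.1.2.1 hx).1)
    have hch1 : ({x | x ∈ cube n d ∧ A x ≠ Astar x}).ncard ≤ ∑ C ∈ tF, C.ncard :=
      le_trans (Set.ncard_le_ncard hdiffsub hUfin) (ncard_biUnion_le tF)
    -- witness children
    have hdata : ∀ C ∈ tF, ∃ j B, Tpred j C ∧ IsBlock n d (S.G (j - 1)) B ∧ B ⊆ C ∧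
        ((j - 1 = 0 ∧ HasCopyIn n d k F A (blockClosure n d k B)) ∨
          (0 < j - 1 ∧ Unrepairable n d k F A B)) := by
      intro C hC
      obtain ⟨j, hT⟩ := (htFmem C).1 hC
      obtain ⟨B, h1, h2, h3⟩ := hT.2.2.2.2
      exact ⟨j, B, hT, h1, h2, h3⟩
    choose! jC BC hTC hBC1 hBC2 hBC3 using hdata
    have hBW : ∀ C ∈ tF, BC C ∈ MaxWitnessFamily n d k (2 * k) S F A := by
      intro C hC
      refine ⟨jC C - 1, ⟨by
        have := (hTC C hC).2.1
        omega, hBC1 C hC, hBC3 C hC⟩, ?_⟩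
      intro m hm1 hm2 B' hB' hsub
      have hjCs := hTC C hC
      have hm3 : jC C ≤ m := by omega
      have hCB' : C ⊆ B' := by
        refine hnest (jC C) m hm3 hm2 C B' hjCs.2.2.1 hB' ?_
        obtain ⟨z, hz⟩ := (hBC1 C hC).1
        exact ⟨z, hBC2 C hC hz, hsub hz⟩
      exact hjCs.2.2.2.1 m hm3 hm2 B' hB' hCB'
    have hcardle : ∀ C ∈ tF, C.ncard ≤ 3 ^ d * (BC C).ncard := by
      intro C hC
      have hjCs := hTC C hC
      obtain ⟨c1, hc1, hb1⟩ := hcardUB (jC C) hjCs.2.1 C hjCs.2.2.1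
      obtain ⟨c2, hc2, hb2⟩ := hcardUB (jC C - 1) (by omega) (BC C) (hBC1 C hC)
      rw [hc1, hc2]
      have hper : ∀ ℓ, c1 ℓ ≤ 3 * c2 ℓ := by
        intro ℓ
        have h1 := hb1 ℓ
        have h2 := hb2 ℓ
        have h3 := (hWdbl (jC C) (by omega) hjCs.2.1).1
        have h4 := hwj (jC C - 1) (by omega)
        omega
      calc (∏ ℓ, c1 ℓ) ≤ ∏ ℓ, 3 * c2 ℓ :=
            Finset.prod_le_prod (fun _ _ => Nat.zero_le _) (fun ℓ _ => hper ℓ)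
        _ = 3 ^ d * ∏ ℓ, c2 ℓ := by
            rw [Finset.prod_mul_distrib, Finset.prod_const, Finset.card_univ,
              Fintype.card_fin]
    have hinj : ∀ C ∈ tF, ∀ C' ∈ tF, BC C = BC C' → C = C' := by
      intro C hC C' hC' hBB
      have h1 := hTC C hC
      have h2 := hTC C' hC'
      have hlev : jC C - 1 = jC C' - 1 := by
        by_contra hnej
        rcases Nat.lt_or_ge (jC C - 1) (jC C' - 1) with h | h
        · exact hlevelcore _ _ h (by omega) (BC C) (hBC1 C hC) (hBB ▸ hBC1 C' hC')
        · exact hlevelcore _ _ (by omega) (by omega) (BC C) (hBB ▸ hBC1 C' hC')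
            (hBC1 C hC)
      have hjeq : jC C = jC C' := by omega
      have hmeet : (C ∩ C').Nonempty := by
        obtain ⟨z, hz⟩ := (hBC1 C hC).1
        exact ⟨z, hBC2 C hC hz, hBC2 C' hC' (hBB ▸ hz)⟩
      have e1 : C ⊆ C' := hnest (jC C) (jC C') (le_of_eq hjeq) h2.2.1 C C'
        h1.2.2.1 h2.2.2.1 hmeet
      have e2 : C' ⊆ C := hnest (jC C') (jC C) (le_of_eq hjeq.symm) h1.2.1 C' C
        h2.2.2.1 h1.2.2.1 ⟨hmeet.choose, hmeet.choose_spec.2, hmeet.choose_spec.1⟩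
      exact Set.Subset.antisymm e1 e2
    have hch2 : (∑ C ∈ tF, C.ncard) ≤ 3 ^ d * ∑ C ∈ tF, (BC C).ncard := by
      rw [Finset.mul_sum]
      exact Finset.sum_le_sum hcardle
    have hch3 : (∑ C ∈ tF, (BC C).ncard) ≤ ∑ B ∈ hWfin.toFinset, B.ncard := by
      have himg : (∑ B ∈ tF.image BC, B.ncard) = ∑ C ∈ tF, (BC C).ncard :=
        Finset.sum_image hinj
      rw [← himg]
      refine Finset.sum_le_sum_of_subset ?_
      intro B hB
      obtain ⟨C, hC, rfl⟩ := Finset.mem_image.1 hB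
      exact (Set.Finite.mem_toFinset hWfin).2 (hBW C hC)
    have hfinal : ε * (n : ℝ) ^ d ≤ (3 : ℝ) ^ d * ∑ B ∈ hWfin.toFinset, (B.ncard : ℝ) := by
      have hnat : ({x | x ∈ cube n d ∧ A x ≠ Astar x}).ncard ≤
          3 ^ d * ∑ B ∈ hWfin.toFinset, B.ncard :=
        le_trans hch1 (le_trans hch2 (Nat.mul_le_mul_left _ hch3))
      have hcast : (({x | x ∈ cube n d ∧ A x ≠ Astar x}).ncard : ℝ) ≤
          (3 : ℝ) ^ d * ∑ B ∈ hWfin.toFinset, (B.ncard : ℝ) := by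
        have := (Nat.cast_le (α := ℝ)).2 hnat
        push_cast at this
        convert this using 2
      exact le_trans hfar hcast
    rw [hfseq]
    have h3p : (0 : ℝ) < (3 : ℝ) ^ d := by positivity
    have hshape : ε * ((n : ℝ) / 3) ^ d = ε * (n : ℝ) ^ d / (3 : ℝ) ^ d := by
      rw [div_pow]
      ring
    rw [hshape, div_le_iff₀ h3p]
    linarith
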